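/- Let (X,d) be a metric space, K a nonempty subset of X, and A, B, S, T selfmaps of K satisfying, for some function ψ satisfying Condition-A and some φ ∈ Φ, the contractive inequality ψ(d(Sx,Ty), d(Sx,Ty)) ≤ φ(max{ψ(d(Ax,By), d(Ax,Sx)), ψ(d(Ax,By), d(By,Ty)), ψ(d(Ax,Sx), d(By,Ty)), ψ(d(By,Ty), d(Ax,Sx)), min{ψ(d(By,Sx), d(Ax,Sx)), ψ(d(Ax,Ty), d(By,Ty))}, min{ψ(d(By,Sx), d(By,Ty)), ψ(d(Ax,Ty), d(Ax,Sx))}}) for all x, y ∈ K. Then A, B, S, T have at most one common fixed point: if z and w satisfy Az = Bz = Sz = Tz = z and Aw = Bw = Sw = Tw = w, then z = w. -/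

import Mathlib

open Set
open scoped NNReal

/-- A two-variable auxiliary function satisfying Condition-A. -/
def ConditionA (ψ : ℝ≥0 → ℝ≥0 → ℝ≥0) : Prop :=
  Continuous (Function.uncurry ψ) ∧
  (∀ t, Monotone fun s => ψ s t) ∧
  (∀ s, Monotone fun t => ψ s t) ∧
  ψ 0 0 = 0 ∧
  ∀ t, ψ t 0 = 0 → t = 0

/-- `φ ∈ Φ`: monotonically increasing, continuous, `0 < φ(t) < t` for `t > 0`. -/
def InPhi (φ : ℝ≥0 → ℝ≥0) : Prop :=
  Monotone φ ∧ Continuous φ ∧ ∀ t, 0 < t → 0 < φ t ∧ φ t < t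

theorem stmt_17 {X : Type*} [MetricSpace X] (K : Set X) (hK : K.Nonempty)
    (A B S T : X → X)
    (hA : MapsTo A K K) (hB : MapsTo B K K) (hS : MapsTo S K K) (hT : MapsTo T K K)
    (ψ : ℝ≥0 → ℝ≥0 → ℝ≥0) (hψ : ConditionA ψ)
    (φ : ℝ≥0 → ℝ≥0) (hφ : InPhi φ)
    (hcontr : ∀ x ∈ K, ∀ y ∈ K,
      ψ (nndist (S x) (T y)) (nndist (S x) (T y)) ≤
        φ (max (ψ (nndist (A x) (B y)) (nndist (A x) (S x)))
          (max (ψ (nndist (A x) (B y)) (nndist (B y) (T y)))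
          (max (ψ (nndist (A x) (S x)) (nndist (B y) (T y)))
          (max (ψ (nndist (B y) (T y)) (nndist (A x) (S x)))
          (max (min (ψ (nndist (B y) (S x)) (nndist (A x) (S x)))
                    (ψ (nndist (A x) (T y)) (nndist (B y) (T y))))
               (min (ψ (nndist (B y) (S x)) (nndist (B y) (T y)))
                    (ψ (nndist (A x) (T y)) (nndist (A x) (S x))))))))))
    (z w : X) (hz : z ∈ K) (hw : w ∈ K)
    (hzfix : A z = z ∧ B z = z ∧ S z = z ∧ T z = z)
    (hwfix : A w = w ∧ B w = w ∧ S w = w ∧ T w = w) :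
    z = w := by
  obtain ⟨hAz, hBz, hSz, hTz⟩ := hzfix
  obtain ⟨hAw, hBw, hSw, hTw⟩ := hwfix
  obtain ⟨_, hmono1, hmono2, hψ00, hψ0⟩ := hψ
  obtain ⟨hφmono, _, hφlt⟩ := hφ
  have h := hcontr z hz w hw
  rw [hAz, hBw, hSz, hTw] at h
  simp only [nndist_self, nndist_comm w z] at h
  set t := nndist z w with ht
  have key : ψ t t ≤ φ (ψ t 0) := by
    have hm : max (ψ t 0) (max (ψ t 0) (max (ψ 0 0) (max (ψ 0 0)
        (max (min (ψ t 0) (ψ t 0)) (min (ψ t 0) (ψ t 0)))))) = ψ t 0 := by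
      have h00 : ψ 0 0 ≤ ψ t 0 := hmono1 0 (zero_le : (0:ℝ≥0) ≤ t)
      simp [h00]
    rwa [hm] at h
  have h1 : ψ t 0 ≤ ψ t t := hmono2 t (zero_le : (0:ℝ≥0) ≤ t)
  have h2 : ψ t t ≤ φ (ψ t t) := le_trans key (hφmono h1)
  have h3 : ψ t t = 0 := by
    by_contra hne
    exact absurd h2 (not_le.mpr ((hφlt _ (pos_iff_ne_zero.mpr hne)).2))
  have h4 : ψ t 0 = 0 := le_antisymm (h3 ▸ h1) zero_le
  have : t = 0 := hψ0 t h4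
  exact nndist_eq_zero.mp this
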